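/- Let (X, μ) be a finite measure space, q ∈ [1, 2), ρ̲ > 0, d a positive natural number, and let ρ' : X → ℝ and v : X → ℝ^d be measurable with ρ' ≥ 0. Set A = {x ∈ X : ρ'(x) ≤ ρ̲/2}. Then ∫ |v|^q dμ ≤ μ(A)^{(2−q)/2} · (∫ |v|² dμ)^{q/2} + (2/ρ̲)^{q/2} · μ(X)^{(2−q)/2} · (∫ ρ'·|v|² dμ)^{q/2}. -/

import Mathlib

open MeasureTheory

/-- Auxiliary Hölder estimate: for a nonnegative integrable function `f` on a finite measure
space and `1 ≤ q < 2`, `∫ f ^ (q/2) ≤ (ν univ)^((2-q)/2) * (∫ f)^(q/2)`. -/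
lemma holder_pow_half {X : Type*} [MeasurableSpace X] (ν : Measure X) [IsFiniteMeasure ν]
    (q : ℝ) (hq1 : 1 ≤ q) (hq2 : q < 2) (f : X → ℝ)
    (hf : Integrable f ν) (hf0 : 0 ≤ᵐ[ν] f) :
    ∫ x, f x ^ (q / 2) ∂ν ≤ (ν Set.univ).toReal ^ ((2 - q) / 2) * (∫ x, f x ∂ν) ^ (q / 2) := by
  have hq0 : (0 : ℝ) < q := lt_of_lt_of_le one_pos hq1
  have hq2' : (0 : ℝ) < 2 - q := by linarith
  have hpq : Real.HolderConjugate (2 / q) (2 / (2 - q)) := by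
    constructor
    · rw [inv_div, inv_div, inv_one]; ring
    · positivity
    · positivity
  -- Memℒp of f ^ (q/2) with exponent 2/q
  have hf1 : MemLp f 1 ν := memLp_one_iff_integrable.2 hf
  have hmem := hf1.norm_rpow_div (ENNReal.ofReal (q / 2))
  have htr : (ENNReal.ofReal (q / 2)).toReal = q / 2 := ENNReal.toReal_ofReal (by positivity)
  have hdiv : (1 : ENNReal) / ENNReal.ofReal (q / 2) = ENNReal.ofReal (2 / q) := by
    rw [one_div, ← ENNReal.ofReal_inv_of_pos (by positivity), inv_div]
  rw [htr, hdiv] at hmem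
  have hmem' : MemLp (fun x => f x ^ (q / 2)) (ENNReal.ofReal (2 / q)) ν := by
    refine hmem.ae_eq ?_
    filter_upwards [hf0] with x hx
    rw [Real.norm_of_nonneg hx]
  have hone : MemLp (fun _ : X => (1 : ℝ)) (ENNReal.ofReal (2 / (2 - q))) ν := memLp_const 1
  have h0 : 0 ≤ᵐ[ν] fun x => f x ^ (q / 2) := by
    filter_upwards [hf0] with x hx; exact Real.rpow_nonneg hx _
  have h1 : 0 ≤ᵐ[ν] fun _ : X => (1 : ℝ) := Filter.Eventually.of_forall fun _ => zero_le_one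
  have key := integral_mul_le_Lp_mul_Lq_of_nonneg hpq h0 h1 hmem' hone
  simp only [mul_one, Real.one_rpow] at key
  have hA : ∫ x, (f x ^ (q / 2)) ^ (2 / q) ∂ν = ∫ x, f x ∂ν := by
    refine integral_congr_ae ?_
    filter_upwards [hf0] with x hx
    have hm : q / 2 * (2 / q) = 1 := by field_simp
    rw [← Real.rpow_mul hx, hm, Real.rpow_one]
  have hB : ∫ _ : X, (1 : ℝ) ∂ν = (ν Set.univ).toReal := by
    simp [integral_const, Measure.real]
  rw [hA, hB, one_div_div, one_div_div] at key
  calc ∫ x, f x ^ (q / 2) ∂ν ≤ (∫ x, f x ∂ν) ^ (q / 2) * (ν Set.univ).toReal ^ ((2 - q) / 2) :=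
        key
    _ = (ν Set.univ).toReal ^ ((2 - q) / 2) * (∫ x, f x ∂ν) ^ (q / 2) := mul_comm _ _

/-- Fourth step of the strong-convergence proof: Hölder on the small-density set and the
lower density bound off it control the L^q norm of the velocity error. -/
theorem velocity_Lq_estimate
    {X : Type*} [MeasurableSpace X] (μ : Measure X) [IsFiniteMeasure μ]
    (q ρlb : ℝ) (hq1 : 1 ≤ q) (hq2 : q < 2) (hρlb : 0 < ρlb)
    (d : ℕ) (hd : 0 < d)
    (ρ' : X → ℝ) (v : X → EuclideanSpace ℝ (Fin d))
    (hρ'm : Measurable ρ') (hvm : Measurable v)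
    (hρ' : ∀ᵐ x ∂μ, 0 ≤ ρ' x)
    (hv2 : Integrable (fun x => ‖v x‖ ^ 2) μ)
    (hρv2 : Integrable (fun x => ρ' x * ‖v x‖ ^ 2) μ) :
    ∫ x, ‖v x‖ ^ q ∂μ ≤
      (μ {x | ρ' x ≤ ρlb / 2}).toReal ^ ((2 - q) / 2) * (∫ x, ‖v x‖ ^ 2 ∂μ) ^ (q / 2)
        + (2 / ρlb) ^ (q / 2) * (μ Set.univ).toReal ^ ((2 - q) / 2) *
          (∫ x, ρ' x * ‖v x‖ ^ 2 ∂μ) ^ (q / 2) := by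
  have hq0 : (0 : ℝ) < q := lt_of_lt_of_le one_pos hq1
  set A : Set X := {x | ρ' x ≤ ρlb / 2} with hAdef
  have hAmeas : MeasurableSet A := measurableSet_le hρ'm measurable_const
  have hnpow : ∀ a : ℝ, 0 ≤ a → a ^ (2 : ℕ) = a ^ (2 : ℝ) := fun a _ => by
    rw [← Real.rpow_natCast a 2]; norm_num
  -- integrability of ‖v‖ ^ q
  have hmq : AEStronglyMeasurable (fun x => ‖v x‖ ^ q) μ :=
    (hvm.norm.pow_const q).aestronglyMeasurable
  have hintq : Integrable (fun x => ‖v x‖ ^ q) μ := by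
    refine Integrable.mono' ((integrable_const (1 : ℝ)).add hv2) hmq ?_
    filter_upwards with x
    rw [Real.norm_of_nonneg (Real.rpow_nonneg (norm_nonneg _) _)]
    simp only [Pi.add_apply]
    rcases le_or_gt (‖v x‖) 1 with h | h
    · have h1 : ‖v x‖ ^ q ≤ 1 := Real.rpow_le_one (norm_nonneg _) h (le_of_lt hq0)
      nlinarith [sq_nonneg (‖v x‖)]
    · have h2 : ‖v x‖ ^ q ≤ ‖v x‖ ^ (2 : ℝ) :=
        Real.rpow_le_rpow_of_exponent_le (le_of_lt h) (le_of_lt hq2)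
      have h3 := hnpow (‖v x‖) (norm_nonneg _)
      rw [← h3] at h2
      linarith
  -- pointwise identity ‖v‖^q = (‖v‖^2)^(q/2)
  have hpt : ∀ x, ‖v x‖ ^ q = (‖v x‖ ^ 2) ^ (q / 2) := by
    intro x
    rw [hnpow (‖v x‖) (norm_nonneg _), ← Real.rpow_mul (norm_nonneg _)]
    congr 1; ring
  -- split the integral
  have hsplit : ∫ x, ‖v x‖ ^ q ∂μ
      = (∫ x in A, ‖v x‖ ^ q ∂μ) + ∫ x in Aᶜ, ‖v x‖ ^ q ∂μ :=
    (integral_add_compl hAmeas hintq).symm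
  -- first term
  have hT1 : ∫ x in A, ‖v x‖ ^ q ∂μ
      ≤ (μ A).toReal ^ ((2 - q) / 2) * (∫ x, ‖v x‖ ^ 2 ∂μ) ^ (q / 2) := by
    have h1 : ∫ x in A, ‖v x‖ ^ q ∂μ = ∫ x in A, (‖v x‖ ^ 2) ^ (q / 2) ∂μ :=
      integral_congr_ae (Filter.Eventually.of_forall fun x => hpt x)
    have h2 := holder_pow_half (μ.restrict A) q hq1 hq2 (fun x => ‖v x‖ ^ 2)
      hv2.restrict (Filter.Eventually.of_forall fun x => by positivity)
    rw [Measure.restrict_apply_univ] at h2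
    have h3 : ∫ x in A, ‖v x‖ ^ 2 ∂μ ≤ ∫ x, ‖v x‖ ^ 2 ∂μ :=
      setIntegral_le_integral hv2 (Filter.Eventually.of_forall fun x => by positivity)
    have h4 : (∫ x in A, ‖v x‖ ^ 2 ∂μ) ^ (q / 2) ≤ (∫ x, ‖v x‖ ^ 2 ∂μ) ^ (q / 2) :=
      Real.rpow_le_rpow (integral_nonneg fun x => by positivity) h3 (by positivity)
    rw [h1]
    exact h2.trans (mul_le_mul_of_nonneg_left h4
      (Real.rpow_nonneg ENNReal.toReal_nonneg _))
  -- second term: the function g = ρ' * ‖v‖²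
  set g : X → ℝ := fun x => ρ' x * ‖v x‖ ^ 2 with hgdef
  have hg0 : 0 ≤ᵐ[μ] g := by filter_upwards [hρ'] with x hx; positivity
  have hgm : Measurable g := hρ'm.mul (hvm.norm.pow_const 2)
  have hintg : Integrable (fun x => g x ^ (q / 2)) μ := by
    refine Integrable.mono' ((integrable_const (1 : ℝ)).add hρv2)
      (hgm.pow_const (q / 2)).aestronglyMeasurable ?_
    filter_upwards [hρ'] with x hx
    have hgx : (0 : ℝ) ≤ g x := by positivity
    rw [Real.norm_of_nonneg (Real.rpow_nonneg hgx _)]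
    simp only [Pi.add_apply]
    rcases le_or_gt (g x) 1 with h | h
    · have h1 : g x ^ (q / 2) ≤ 1 := Real.rpow_le_one hgx h (by positivity)
      linarith
    · have h2 : g x ^ (q / 2) ≤ g x ^ (1 : ℝ) :=
        Real.rpow_le_rpow_of_exponent_le (le_of_lt h) (by linarith)
      rw [Real.rpow_one] at h2
      linarith
  have hT2a : ∫ x in Aᶜ, ‖v x‖ ^ q ∂μ
      ≤ (2 / ρlb) ^ (q / 2) * ∫ x in Aᶜ, g x ^ (q / 2) ∂μ := by
    rw [← integral_const_mul]
    refine integral_mono_ae hintq.restrict (hintg.const_mul _).restrict ?_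
    filter_upwards [ae_restrict_mem hAmeas.compl, ae_restrict_of_ae hρ'] with x hxA hx0
    have hxA' : ρlb / 2 < ρ' x := not_le.mp hxA
    have hgx : (0 : ℝ) ≤ g x := by positivity
    have hv2le : ‖v x‖ ^ 2 ≤ 2 / ρlb * g x := by
      rw [hgdef, div_mul_eq_mul_div, le_div_iff₀ hρlb]
      show ‖v x‖ ^ 2 * ρlb ≤ 2 * (ρ' x * ‖v x‖ ^ 2)
      nlinarith [sq_nonneg (‖v x‖), norm_nonneg (v x)]
    calc ‖v x‖ ^ q = (‖v x‖ ^ 2) ^ (q / 2) := hpt x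
      _ ≤ (2 / ρlb * g x) ^ (q / 2) :=
          Real.rpow_le_rpow (by positivity) hv2le (by positivity)
      _ = (2 / ρlb) ^ (q / 2) * g x ^ (q / 2) :=
          Real.mul_rpow (by positivity) hgx
  have hT2b : ∫ x in Aᶜ, g x ^ (q / 2) ∂μ ≤ ∫ x, g x ^ (q / 2) ∂μ := by
    refine setIntegral_le_integral hintg ?_
    filter_upwards [hρ'] with x hx
    have : (0 : ℝ) ≤ g x := by positivity
    exact Real.rpow_nonneg this _
  have hT2c := holder_pow_half μ q hq1 hq2 g hρv2 hg0
  have hT2 : ∫ x in Aᶜ, ‖v x‖ ^ q ∂μ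
      ≤ (2 / ρlb) ^ (q / 2) * (μ Set.univ).toReal ^ ((2 - q) / 2) *
        (∫ x, g x ∂μ) ^ (q / 2) := by
    rw [mul_assoc]
    exact hT2a.trans (mul_le_mul_of_nonneg_left (hT2b.trans hT2c) (by positivity))
  rw [hsplit]
  exact add_le_add hT1 hT2
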